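/- Let τ > 0, σ > 0, a ∈ ℝ, and u_a, u_b ∈ ℝ, and let u : ℝ → ℝ be the affine function u(s) = u_a + ((u_b − u_a)/τ)(s − a) (so u(a) = u_a and u(a+τ) = u_b). Then ∫_a^{a+τ} e^{−σ(a + 2τ − s)} u(s) ds = w¹ u_b + w² u_a, where w¹ = e^{−στ}(e^{−στ} − 1 + στ)/(σ²τ) and w² = e^{−στ}(1 − e^{−στ} − στ e^{−στ})/(σ²τ). -/

import Mathlib

/-- Exact convolution weights for the fast sum-of-exponentials time-stepping scheme:
integrating `e^{−σ(a+2τ−s)}` against the affine interpolant of `u` on `[a, a+τ]` gives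
`w¹ u_b + w² u_a` with `w¹ = e^{−στ}(e^{−στ} − 1 + στ)/(σ²τ)` and
`w² = e^{−στ}(1 − e^{−στ} − στ e^{−στ})/(σ²τ)`. -/
theorem soe_convolution_weights (τ σ a ua ub : ℝ) (hτ : 0 < τ) (hσ : 0 < σ) :
    ∫ s in a..(a + τ), Real.exp (-σ * (a + 2 * τ - s)) * (ua + (ub - ua) / τ * (s - a)) =
      Real.exp (-σ * τ) * (Real.exp (-σ * τ) - 1 + σ * τ) / (σ ^ 2 * τ) * ub +
      Real.exp (-σ * τ) * (1 - Real.exp (-σ * τ) - σ * τ * Real.exp (-σ * τ)) / (σ ^ 2 * τ) * ua := by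
  have hσ' : σ ≠ 0 := hσ.ne'
  have hτ' : τ ≠ 0 := hτ.ne'
  set k := (ub - ua) / τ with hk
  have key : ∀ s ∈ Set.uIcc a (a + τ),
      HasDerivAt (fun s => Real.exp (-σ * (a + 2 * τ - s)) *
        ((ua + k * (s - a)) / σ - k / σ ^ 2))
        (Real.exp (-σ * (a + 2 * τ - s)) * (ua + k * (s - a))) s := by
    intro s _
    have h1 : HasDerivAt (fun s : ℝ => -σ * (a + 2 * τ - s)) σ s := by
      have := ((hasDerivAt_id s).const_sub (a + 2 * τ)).const_mul (-σ)
      simpa using this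
    have h2 : HasDerivAt (fun s : ℝ => Real.exp (-σ * (a + 2 * τ - s)))
        (Real.exp (-σ * (a + 2 * τ - s)) * σ) s := h1.exp
    have h3 : HasDerivAt (fun s : ℝ => (ua + k * (s - a)) / σ - k / σ ^ 2) (k / σ) s := by
      have := (((hasDerivAt_id s).sub_const a).const_mul k).const_add ua
      simpa using (this.div_const σ).sub_const (k / σ ^ 2)
    have : HasDerivAt (fun s : ℝ => Real.exp (-σ * (a + 2 * τ - s)) *
        ((ua + k * (s - a)) / σ - k / σ ^ 2))
        (Real.exp (-σ * (a + 2 * τ - s)) * σ * ((ua + k * (s - a)) / σ - k / σ ^ 2) +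
          Real.exp (-σ * (a + 2 * τ - s)) * (k / σ)) s := h2.mul h3
    convert this using 1
    field_simp
    ring
  rw [intervalIntegral.integral_eq_sub_of_hasDerivAt key]
  · have e1 : -σ * (a + 2 * τ - (a + τ)) = -σ * τ := by ring
    have e2 : -σ * (a + 2 * τ - a) = -σ * τ + -σ * τ := by ring
    rw [e1, e2, Real.exp_add, hk]
    field_simp
    ring
  · apply Continuous.intervalIntegrable
    continuity
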